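/- arXiv:1604.07162 — 2 statements merged into one kernel-verified Lean document; each statement's English description precedes it below -/
import Mathlib

section
/- Let I be a finite type with a distinguished element 0 and an involution i ↦ i' satisfying 0' = 0. Let S be an I × I complex matrix which is symmetric (Sᵀ = S) and satisfies S·S = C, where C is the charge-conjugation matrix C i j = 1 if i = j' and C i j = 0 otherwise, and assume S 0 s ≠ 0 for every s ∈ I. Define the Verlinde fusion numbers N i j k = Σ_{s ∈ I} S i s · S j s · S k' s / S 0 s. For a coefficient vector a : I → ℂ define the extended S-entry Ŝ a l = Σ_{i ∈ I} a i · S i l. Given two coefficient vectors a, b : I → ℂ, define their fusion-product coefficient vector c : I → ℂ by c k = Σ_{i,j ∈ I} a i · b j · N i j k. Then for every l ∈ I: Ŝ c l = (Ŝ a l · Ŝ b l) / S 0 l. (This is the paper's Lemma 3.4: for arbitrary, not necessarily irreducible, modules U = ⊕ a_i M^i and W = ⊕ b_j M^j one has S_{U⊠W, M^l} = S_{U,M^l} S_{W,M^l} / S_{V,M^l}, using the extended definition of S-matrix entries.) -/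
/-- Lemma 3.4, extended S-entries: for coefficient vectors
`a b : I → ℂ`, with extended S-entry `Ŝ a l = Σ_i a i · S i l` and
fusion-product coefficient vector `c k = Σ_{i,j} a i · b j · N i j k`, one has
`Ŝ c l = Ŝ a l · Ŝ b l / S 0 l` for every `l`. Here `z` plays the role of the
distinguished index `0` and `p` is the involution `i ↦ i'`. -/
theorem stmt_4 {I : Type*} [Fintype I] [DecidableEq I]
    (z : I) (p : I → I) (hp : ∀ i, p (p i) = i) (hz : p z = z)
    (S : Matrix I I ℂ) (hsym : S.transpose = S)
    (hSS : S * S = Matrix.of fun i j => if i = p j then (1 : ℂ) else 0)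
    (hS0 : ∀ s, S z s ≠ 0)
    (N : I → I → I → ℂ)
    (hN : ∀ i j k, N i j k = ∑ s, S i s * S j s * S (p k) s / S z s)
    (Shat : (I → ℂ) → I → ℂ)
    (hShat : ∀ a l, Shat a l = ∑ i, a i * S i l)
    (a b c : I → ℂ)
    (hc : ∀ k, c k = ∑ i, ∑ j, a i * b j * N i j k) :
    ∀ l, Shat c l = Shat a l * Shat b l / S z l := by
  have hs : ∀ i j : I, S i j = S j i := by
    intro i j
    have := congrFun (congrFun hsym j) i
    simpa [Matrix.transpose_apply] using this
  -- S * C = C * S gives S s (p l) = S (p s) l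
  have hSC : ∀ s l : I, S s (p l) = S (p s) l := by
    intro s l
    have h1 : S * (S * S) = (S * S) * S := by rw [Matrix.mul_assoc]
    rw [hSS] at h1
    have h2 := congrFun (congrFun h1 s) l
    simp only [Matrix.mul_apply, Matrix.of_apply] at h2
    have e1 : (∑ k, S s k * if k = p l then (1:ℂ) else 0) = S s (p l) := by
      simp [mul_ite]
    have e2 : (∑ k, (if s = p k then (1:ℂ) else 0) * S k l) = S (p s) l := by
      have : ∀ k : I, (s = p k) ↔ (k = p s) := by
        intro k
        constructor
        · intro h; rw [h, hp]
        · intro h; rw [h, hp]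
      simp only [this]
      simp [ite_mul]
    rw [e1, e2] at h2
    exact h2
  have orth : ∀ s l : I, (∑ k, S (p k) s * S k l) = if s = l then (1:ℂ) else 0 := by
    intro s l
    have : (∑ k, S (p k) s * S k l) = ∑ k, S (p s) k * S k l := by
      apply Finset.sum_congr rfl
      intro k _
      rw [hs (p k) s, hSC s k]
    rw [this]
    have h2 := congrFun (congrFun hSS (p s)) l
    simp only [Matrix.mul_apply, Matrix.of_apply] at h2
    rw [h2]
    have : (p s = p l) ↔ (s = l) := by
      constructor
      · intro h; have := congrArg p h; rwa [hp, hp] at this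
      · intro h; rw [h]
    simp [this]
  have key : ∀ i j l : I, (∑ k, N i j k * S k l) = S i l * S j l / S z l := by
    intro i j l
    calc (∑ k, N i j k * S k l)
        = ∑ k, ∑ s, (S i s * S j s / S z s) * (S (p k) s * S k l) := by
          apply Finset.sum_congr rfl
          intro k _
          rw [hN, Finset.sum_mul]
          apply Finset.sum_congr rfl
          intro s _
          ring
      _ = ∑ s, (S i s * S j s / S z s) * ∑ k, (S (p k) s * S k l) := by
          rw [Finset.sum_comm]
          simp [Finset.mul_sum]
      _ = S i l * S j l / S z l := by
          simp only [orth]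
          simp
  intro l
  rw [hShat, hShat, hShat]
  calc (∑ k, c k * S k l)
      = ∑ i, ∑ j, a i * b j * (S i l * S j l / S z l) := by
        simp only [hc, Finset.sum_mul]
        rw [Finset.sum_comm]
        apply Finset.sum_congr rfl
        intro i _
        rw [Finset.sum_comm]
        apply Finset.sum_congr rfl
        intro j _
        rw [← key i j l, Finset.mul_sum]
        apply Finset.sum_congr rfl
        intro k _
        ring
    _ = (∑ i, a i * S i l) * (∑ j, b j * S j l) / S z l := by
        rw [Finset.sum_mul, Finset.sum_div]
        apply Finset.sum_congr rfl
        intro i _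
        rw [Finset.mul_sum, Finset.sum_div]
        apply Finset.sum_congr rfl
        intro j _
        ring
end

section
/- Let I be a finite type with a distinguished element 0 and an involution i ↦ i' satisfying 0' = 0. Let S be an I × I complex matrix which is symmetric (Sᵀ = S) and satisfies S·S = C, where C is the charge-conjugation matrix C i j = 1 if i = j' and C i j = 0 otherwise, and assume S 0 s ≠ 0 for every s ∈ I. Define the Verlinde fusion numbers N i j k = Σ_{s ∈ I} S i s · S j s · S k' s / S 0 s, and for fixed i let N(i) be the I × I matrix with entries N(i) j k = N i j k. Then S⁻¹ · N(i) · S equals the diagonal matrix with diagonal entries S i s / S 0 s (s ∈ I); equivalently, the S-matrix diagonalizes every fusion matrix N(i) with eigenvalues S i s / S 0 s. (Matrix form of Theorem 2.2(4).) -/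
/-- matrix form of Theorem 2.2(4): the S-matrix diagonalizes
every fusion matrix `N(i) = (N i j k)_{j,k}`, i.e.
`S⁻¹ · N(i) · S = diag (S i s / S 0 s)`. Here `z` plays the role of the
distinguished index `0` and `p` is the involution `i ↦ i'`. -/
theorem stmt_5 {I : Type*} [Fintype I] [DecidableEq I]
    (z : I) (p : I → I) (hp : ∀ i, p (p i) = i) (hz : p z = z)
    (S : Matrix I I ℂ) (hsym : S.transpose = S)
    (hSS : S * S = Matrix.of fun i j => if i = p j then (1 : ℂ) else 0)
    (hS0 : ∀ s, S z s ≠ 0)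
    (N : I → I → I → ℂ)
    (hN : ∀ i j k, N i j k = ∑ s, S i s * S j s * S (p k) s / S z s)
    (Nmat : I → Matrix I I ℂ)
    (hNmat : ∀ i j k, Nmat i j k = N i j k) :
    ∀ i, S⁻¹ * Nmat i * S = Matrix.diagonal (fun s => S i s / S z s) := by
  set C : Matrix I I ℂ := Matrix.of fun i j => if i = p j then (1 : ℂ) else 0 with hC
  have hpinj : Function.Injective p := Function.LeftInverse.injective hp
  have hsymm : ∀ a b, S a b = S b a := by
    intro a b
    conv_lhs => rw [← hsym]
    rfl
  have hCC : C * C = 1 := by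
    ext i j
    simp only [hC, Matrix.mul_apply, Matrix.of_apply, Matrix.one_apply]
    rw [Finset.sum_eq_single (p j)]
    · simp [hp, eq_comm]
    · intro k _ hk
      simp [hk]
    · simp
  have hSSC : S * (S * C) = 1 := by rw [← mul_assoc, hSS, hCC]
  have hdet : IsUnit S.det := by
    apply IsUnit.of_mul_eq_one (S * C).det
    rw [← Matrix.det_mul, hSSC, Matrix.det_one]
  -- C * S = S * C, hence S (p a) b = S a (p b)
  have hcomm : C * S = S * C := by
    rw [← hSS, mul_assoc, ← mul_assoc, hSS]
  have hpS : ∀ a b, S (p a) b = S a (p b) := by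
    intro a b
    have h := congrFun (congrFun hcomm a) b
    simp only [Matrix.mul_apply, hC, Matrix.of_apply] at h
    rw [Finset.sum_eq_single (p a), Finset.sum_eq_single (p b)] at h
    · simpa [hp] using h
    · intro k _ hk; simp [hk]
    · simp
    · intro k _ hk
      have : a ≠ p k := fun e => hk (by rw [e, hp])
      simp [this]
    · simp [hp]
  have hortho : ∀ s t, (∑ k, S (p k) s * S k t) = if s = t then 1 else 0 := by
    intro s t
    have h1 : (∑ k, S (p k) s * S k t) = ∑ k, S (p s) k * S k t := by
      apply Finset.sum_congr rfl
      intro k _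
      rw [hpS k s, hsymm k (p s)]
    rw [h1]
    have h2 := congrFun (congrFun hSS (p s)) t
    simp only [Matrix.mul_apply, Matrix.of_apply] at h2
    rw [h2]
    by_cases hst : s = t
    · simp [hst, hC]
    · have hne : p s ≠ p t := fun e => hst (hpinj e)
      simp [hst, hne, hC]
  intro i
  have hNS : Nmat i * S = S * Matrix.diagonal (fun s => S i s / S z s) := by
    ext j t
    rw [Matrix.mul_diagonal, Matrix.mul_apply]
    calc (∑ k, Nmat i j k * S k t)
        = ∑ k, ∑ s, (S i s * S j s / S z s) * (S (p k) s * S k t) := by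
          apply Finset.sum_congr rfl
          intro k _
          rw [hNmat, hN, Finset.sum_mul]
          apply Finset.sum_congr rfl
          intro s _
          ring
      _ = ∑ s, (S i s * S j s / S z s) * (∑ k, S (p k) s * S k t) := by
          rw [Finset.sum_comm]
          exact Finset.sum_congr rfl fun s _ => (Finset.mul_sum _ _ _).symm
      _ = ∑ s, (S i s * S j s / S z s) * (if s = t then 1 else 0) := by
          simp [hortho]
      _ = S i t * S j t / S z t := by
          simp [Finset.sum_ite_eq', mul_ite]
      _ = S j t * (S i t / S z t) := by ring
  rw [mul_assoc, hNS, ← mul_assoc, Matrix.nonsing_inv_mul S hdet, one_mul]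
end
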